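/- Let p be a prime, d ≥ 1, and Φ a d×d matrix over ℤ_p with det(Φⁿ − Id) ≠ 0 for all n ≥ 1, and suppose that the reduction of Φ modulo p (a matrix over 𝔽_p) is not nilpotent (equivalently, some eigenvalue of Φ in an algebraic closure of ℚ_p has absolute value 1). Then the sequence of Reidemeister numbers u(n) = ‖det(Φⁿ − Id)‖_p^{-1} (a sequence of positive integers) does not satisfy any linear recurrence: there are no D ≥ 1 and complex constants c₀, …, c_{D−1} such that u(n + D) = ∑_{i=0}^{D−1} cᵢ·u(n + i) for all n ≥ 1. -/

import Mathlib

namespace ReidAux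
set_option maxHeartbeats 800000

open Finset

variable {p : ℕ} [hp : Fact p.Prime] {d : ℕ}

local notation "Mat" => Matrix (Fin d) (Fin d) (ℤ_[p])

/-- reduction mod `p^s` as a ring hom on matrices -/
noncomputable def qmap (p : ℕ) [Fact p.Prime] (d s : ℕ) :
    Matrix (Fin d) (Fin d) (ℤ_[p]) →+* Matrix (Fin d) (Fin d) (ZMod (p ^ s)) :=
  (PadicInt.toZModPow s).mapMatrix

/-- congruence mod `p^s` -/
def Cong (s : ℕ) (A B : Matrix (Fin d) (Fin d) (ℤ_[p])) : Prop :=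
  qmap p d s A = qmap p d s B

lemma scalar_eq_iff_dvd (s : ℕ) (x y : ℤ_[p]) :
    PadicInt.toZModPow s x = PadicInt.toZModPow s y ↔ (p : ℤ_[p]) ^ s ∣ x - y := by
  rw [← sub_eq_zero, ← map_sub, ← RingHom.mem_ker, PadicInt.ker_toZModPow,
    Ideal.mem_span_singleton]

lemma cong_iff_dvd {s : ℕ} {A B : Mat} :
    Cong s A B ↔ ∀ i j, (p : ℤ_[p]) ^ s ∣ A i j - B i j := by
  unfold Cong qmap
  simp only [RingHom.mapMatrix_apply]
  constructor
  · intro h i j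
    have := congrFun (congrFun h i) j
    simp only [Matrix.map_apply] at this
    rw [← scalar_eq_iff_dvd]
    exact this
  · intro h
    ext i j
    simp only [Matrix.map_apply]
    rw [scalar_eq_iff_dvd]
    exact h i j

lemma cong_refl {s : ℕ} (A : Mat) : Cong s A A := rfl

lemma cong_symm {s : ℕ} {A B : Mat} (h : Cong s A B) : Cong s B A := Eq.symm h

lemma cong_trans {s : ℕ} {A B C : Mat} (h1 : Cong s A B) (h2 : Cong s B C) :
    Cong s A C := Eq.trans h1 h2

lemma cong_mono {s t : ℕ} (hst : s ≤ t) {A B : Mat} (h : Cong t A B) :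
    Cong s A B := by
  rw [cong_iff_dvd] at h ⊢
  exact fun i j => (pow_dvd_pow _ hst).trans (h i j)

lemma cong_mul {s : ℕ} {A B C D : Mat} (h1 : Cong s A B) (h2 : Cong s C D) :
    Cong s (A * C) (B * D) := by
  unfold Cong at *; rw [map_mul, map_mul, h1, h2]

lemma cong_add {s : ℕ} {A B C D : Mat} (h1 : Cong s A B) (h2 : Cong s C D) :
    Cong s (A + C) (B + D) := by
  unfold Cong at *; rw [map_add, map_add, h1, h2]

lemma cong_sub {s : ℕ} {A B C D : Mat} (h1 : Cong s A B) (h2 : Cong s C D) :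
    Cong s (A - C) (B - D) := by
  unfold Cong at *; rw [map_sub, map_sub, h1, h2]

lemma cong_pow {s : ℕ} {A B : Mat} (h : Cong s A B) (n : ℕ) :
    Cong s (A ^ n) (B ^ n) := by
  unfold Cong at *; rw [map_pow, map_pow, h]

lemma cong_det {s : ℕ} {A B : Mat} (h : Cong s A B) :
    (p : ℤ_[p]) ^ s ∣ A.det - B.det := by
  rw [← scalar_eq_iff_dvd]
  have hA : (PadicInt.toZModPow (p := p) s) A.det = (qmap p d s A).det := by
    rw [RingHom.map_det]; rfl
  have hB : (PadicInt.toZModPow (p := p) s) B.det = (qmap p d s B).det := by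
    rw [RingHom.map_det]; rfl
  rw [hA, hB, h]

lemma cong_sum {s : ℕ} {ι : Type*} (t : Finset ι) (f g : ι → Mat)
    (h : ∀ i ∈ t, Cong s (f i) (g i)) :
    Cong s (∑ i ∈ t, f i) (∑ i ∈ t, g i) := by
  unfold Cong at *
  rw [map_sum, map_sum]
  exact Finset.sum_congr rfl fun i hi => h i hi

lemma dvd_norm_le {s : ℕ} {x : ℤ_[p]} (h : (p : ℤ_[p]) ^ s ∣ x) :
    ‖x‖ ≤ ((p : ℝ) ^ s)⁻¹ := by
  have := (PadicInt.norm_le_pow_iff_mem_span_pow x s).mpr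
    (Ideal.mem_span_singleton.mpr h)
  rwa [zpow_neg, zpow_natCast] at this

/-- if all entries of `X - Y` are divisible by every power of `p` then `X = Y` -/
lemma eq_of_forall_cong {A B : Mat} (h : ∀ s, Cong s A B) : A = B := by
  ext i j
  have hdvd : ∀ s : ℕ, (p : ℤ_[p]) ^ s ∣ A i j - B i j :=
    fun s => (cong_iff_dvd.mp (h s)) i j
  have hz : A i j - B i j = 0 := by
    by_contra hne
    have hpos : 0 < ‖A i j - B i j‖ := norm_pos_iff.mpr hne
    obtain ⟨s, hs⟩ := exists_pow_lt_of_lt_one hpos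
      (show (p:ℝ)⁻¹ < 1 by
        rw [inv_lt_one_iff₀]; right; exact_mod_cast hp.out.one_lt)
    have hle := dvd_norm_le (hdvd s)
    rw [← inv_pow] at hle
    linarith
  exact sub_eq_zero.mp hz

lemma pnorm_pow (x : ℤ_[p]) (n : ℕ) : ‖x ^ n‖ = ‖x‖ ^ n := by
  induction n with
  | zero => simp
  | succ m ih => rw [pow_succ, pow_succ, norm_mul, ih]

lemma real_pow_eq_one {a : ℝ} (h0 : 0 ≤ a) {e : ℕ} (he : 1 ≤ e) (hae : a ^ e = 1) :
    a = 1 := by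
  rcases lt_trichotomy a 1 with hlt | heq | hgt
  · exfalso
    have := pow_lt_one₀ (n := e) h0 hlt (by omega)
    rw [hae] at this
    exact lt_irrefl _ this
  · exact heq
  · exfalso
    have := one_lt_pow₀ (n := e) hgt (by omega)
    rw [hae] at this
    exact lt_irrefl _ this

/-- ultrametric: if `‖x - y‖ < ‖y‖` then `‖x‖ = ‖y‖`. -/
lemma norm_eq_of_sub_lt {x y : ℤ_[p]} (h : ‖x - y‖ < ‖y‖) : ‖x‖ = ‖y‖ := by
  have h1 : ‖x‖ ≤ ‖y‖ := by
    have := PadicInt.nonarchimedean (x - y) y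
    simpa using this.trans (max_le (le_of_lt h) le_rfl)
  rcases lt_or_eq_of_le h1 with hlt | heq
  · exfalso
    have := PadicInt.nonarchimedean (y - x) x
    rw [show y - x + x = y by ring] at this
    have hyx : ‖y - x‖ = ‖x - y‖ := by rw [← norm_neg]; congr 1; ring
    rw [hyx] at this
    exact lt_irrefl _ (lt_of_le_of_lt this (max_lt h hlt))
  · exact heq


/-- in a finite monoid, some power is "absorbing": `x^(j*e) = x^e` for all `j ≥ 1`. -/
lemma exists_pow_idem {α : Type*} [Monoid α] [Finite α] (x : α) :
    ∃ e : ℕ, 1 ≤ e ∧ ∀ j : ℕ, 1 ≤ j → x ^ (j * e) = x ^ e := by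
  have key : ∀ r s : ℕ, r < s → x ^ r = x ^ s →
      ∃ e : ℕ, 1 ≤ e ∧ ∀ j : ℕ, 1 ≤ j → x ^ (j * e) = x ^ e := by
    intro r s hl hxab
    set T := s - r with hT
    have hT1 : 1 ≤ T := by omega
    have step : ∀ m, r ≤ m → x ^ (m + T) = x ^ m := by
      intro m hm
      have h1 : x ^ (m + T) = x ^ (m - r) * x ^ s := by
        rw [← pow_add]; congr 1; omega
      rw [h1, ← hxab, ← pow_add, show m - r + r = m by omega]
    have per : ∀ c m, r ≤ m → x ^ (m + c * T) = x ^ m := by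
      intro c
      induction c with
      | zero => simp
      | succ n ih =>
        intro m hm
        have h2 : m + (n + 1) * T = (m + n * T) + T := by ring
        rw [h2, step _ (by omega), ih m hm]
    refine ⟨(r + 1) * T, by nlinarith, fun j hj => ?_⟩
    obtain ⟨j', rfl⟩ : ∃ j', j = j' + 1 := ⟨j - 1, by omega⟩
    have h3 : (j' + 1) * ((r + 1) * T) = (r + 1) * T + (j' * (r + 1)) * T := by ring
    rw [h3, per _ _ (by nlinarith)]
  obtain ⟨a, b, hab, hxab⟩ := Finite.exists_ne_map_eq_of_infinite (fun n : ℕ => x ^ n)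
  rcases Ne.lt_or_gt hab with hl | hl
  · exact key a b hl hxab
  · exact key b a hl hxab.symm


lemma cong_pow_p {s : ℕ} (hs : 1 ≤ s) {a b : Mat} (hab : Commute a b)
    (hc : Cong s a b) : Cong (s + 1) (a ^ p) (b ^ p) := by
  have hc1 : Cong 1 a b := cong_mono (by omega) hc
  set S : Mat := ∑ i ∈ Finset.range p, a ^ i * b ^ (p - 1 - i) with hS
  have hgeo : S * (a - b) = a ^ p - b ^ p := hab.geom_sum₂_mul p
  have hSmod : Cong 1 S (∑ _i ∈ Finset.range p, b ^ (p - 1)) := by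
    apply cong_sum
    intro i hi
    have h1 : Cong 1 (a ^ i * b ^ (p - 1 - i)) (b ^ i * b ^ (p - 1 - i)) :=
      cong_mul (cong_pow hc1 i) (cong_refl _)
    have h2 : (b : Mat) ^ i * b ^ (p - 1 - i) = b ^ (p - 1) := by
      rw [← pow_add]; congr 1
      have := Finset.mem_range.mp hi
      omega
    rwa [h2] at h1
  have hSdvd : ∀ i j, (p : ℤ_[p]) ∣ S i j := by
    intro i j
    have hd := (cong_iff_dvd.mp hSmod) i j
    rw [pow_one] at hd
    have hsum : (∑ _i ∈ Finset.range p, (b : Mat) ^ (p - 1)) i j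
        = p * ((b ^ (p - 1)) i j) := by
      rw [Matrix.sum_apply]
      simp [Finset.sum_const, nsmul_eq_mul]
    have : S i j = (S i j - (∑ _i ∈ Finset.range p, (b : Mat) ^ (p - 1)) i j)
        + p * ((b ^ (p - 1)) i j) := by rw [hsum]; ring
    rw [this]
    exact dvd_add (by simpa [Matrix.sub_apply] using hd) (Dvd.intro _ rfl)
  rw [cong_iff_dvd]
  intro i j
  have he : a ^ p - b ^ p = S * (a - b) := hgeo.symm
  have : (a ^ p) i j - (b ^ p) i j = ∑ k, S i k * (a - b) k j := by
    rw [← Matrix.sub_apply, he, Matrix.mul_apply]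
  rw [this]
  apply Finset.dvd_sum
  intro k _
  rw [pow_succ']
  exact mul_dvd_mul (hSdvd i k) ((cong_iff_dvd.mp hc) k j)


lemma norm_le_dvd {s : ℕ} {x : ℤ_[p]} (h : ‖x‖ ≤ ((p : ℝ) ^ s)⁻¹) :
    (p : ℤ_[p]) ^ s ∣ x := by
  rw [← Ideal.mem_span_singleton, ← PadicInt.norm_le_pow_iff_mem_span_pow]
  rwa [zpow_neg, zpow_natCast]

lemma cong_of_eq {s : ℕ} {A B A' B' : Mat} (h : Cong s A B)
    (hA : A = A') (hB : B = B') : Cong s A' B' := hA ▸ hB ▸ h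

/-- limit of a `p`-adically fast Cauchy sequence of matrices -/
lemma exists_limit {A : ℕ → Mat} (hstep : ∀ k, Cong (k + 1) (A (k + 1)) (A k)) :
    ∃ Q : Matrix (Fin d) (Fin d) (ℤ_[p]), ∀ k, Cong (k + 1) Q (A k) := by
  have hp1 : (1 : ℝ) < p := by exact_mod_cast hp.out.one_lt
  have hppos : (0 : ℝ) < p := by linarith
  have H : ∀ i j, ∃ q : ℤ_[p], ∀ k, (p : ℤ_[p]) ^ (k + 1) ∣ q - A k i j := by
    intro i j
    set a : ℕ → ℤ_[p] := fun k => A k i j with ha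
    have hbd : ∀ k, ‖a (k + 1) - a k‖ ≤ ((p : ℝ) ^ (k + 1))⁻¹ := by
      intro k
      exact dvd_norm_le (by simpa [Matrix.sub_apply] using (cong_iff_dvd.mp (hstep k)) i j)
    have tail : ∀ k m, k ≤ m → ‖a m - a k‖ ≤ ((p : ℝ) ^ (k + 1))⁻¹ := by
      intro k m
      induction m with
      | zero =>
        intro hk
        interval_cases k
        simp only [sub_self, norm_zero]; positivity
      | succ n ih =>
        intro hk
        rcases Nat.lt_or_ge k (n + 1) with hlt | hge
        · have h1 : ‖a (n + 1) - a k‖ ≤ max ‖a (n + 1) - a n‖ ‖a n - a k‖ := by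
            have := PadicInt.nonarchimedean (a (n + 1) - a n) (a n - a k)
            simpa [show a (n+1) - a n + (a n - a k) = a (n+1) - a k by ring] using this
          refine h1.trans (max_le ((hbd n).trans ?_) (ih (by omega)))
          apply inv_anti₀ (by positivity)
          exact pow_le_pow_right₀ (by linarith) (by omega)
        · have : k = n + 1 := by omega
          subst this
          simp only [sub_self, norm_zero]; positivity
    have hcauchy : CauchySeq a := by
      apply cauchySeq_of_le_geometric (r := (p : ℝ)⁻¹) (C := (p : ℝ)⁻¹)
        (by rw [inv_lt_one_iff₀]; right; exact hp1)
      intro n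
      rw [dist_eq_norm, show a n - a (n + 1) = -(a (n + 1) - a n) by ring, norm_neg]
      refine (hbd n).trans (le_of_eq ?_)
      rw [← inv_pow, pow_succ']
    obtain ⟨q, hq⟩ := cauchySeq_tendsto_of_complete hcauchy
    refine ⟨q, fun k => norm_le_dvd ?_⟩
    have hten : Filter.Tendsto (fun m => ‖a m - a k‖) Filter.atTop (nhds ‖q - a k‖) :=
      ((hq.sub tendsto_const_nhds).norm)
    refine le_of_tendsto hten ?_
    filter_upwards [Filter.eventually_ge_atTop k] with m hm
    exact tail k m hm
  choose q hq using H
  refine ⟨Matrix.of q, fun k => cong_iff_dvd.mpr (fun i j => ?_)⟩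
  simpa [Matrix.sub_apply] using hq i j k

end ReidAux


set_option maxHeartbeats 1600000 in
open ReidAux Filter in
theorem reidemeister_sequence_not_linear_recurrence (p : ℕ) [Fact p.Prime]
    (d : ℕ) (hd : 1 ≤ d) (Φ : Matrix (Fin d) (Fin d) ℤ_[p])
    (h : ∀ n : ℕ, 1 ≤ n → (Φ ^ n - 1).det ≠ 0)
    (hnil : ¬ IsNilpotent (Φ.map (PadicInt.toZMod (p := p)))) :
    ¬ ∃ (D : ℕ), 1 ≤ D ∧ ∃ c : Fin D → ℂ,
      ∀ n : ℕ, 1 ≤ n →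
        ((‖(Φ ^ (n + D) - 1).det‖⁻¹ : ℝ) : ℂ) =
          ∑ i : Fin D, c i * ((‖(Φ ^ (n + (i : ℕ)) - 1).det‖⁻¹ : ℝ) : ℂ) := by
  rintro ⟨D, hD, c, hrec⟩
  have hp' := (Fact.out : p.Prime)
  have hp1 : (1 : ℝ) < p := by exact_mod_cast hp'.one_lt
  have hppos : (0 : ℝ) < p := by linarith
  -- bridge between reduction mod p and Cong 1
  have sbridge : ∀ x y : ℤ_[p],
      PadicInt.toZMod (p := p) x = PadicInt.toZMod (p := p) y ↔ (p : ℤ_[p]) ∣ x - y := by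
    intro x y
    rw [← sub_eq_zero, ← map_sub, ← RingHom.mem_ker, PadicInt.ker_toZMod,
      PadicInt.maximalIdeal_eq_span_p, Ideal.mem_span_singleton]
  have bridge : ∀ X Y : Matrix (Fin d) (Fin d) ℤ_[p],
      X.map (PadicInt.toZMod (p := p)) = Y.map (PadicInt.toZMod (p := p)) ↔ Cong 1 X Y := by
    intro X Y
    rw [cong_iff_dvd]
    constructor
    · intro hXY i j
      have := congrFun (congrFun hXY i) j
      simp only [Matrix.map_apply] at this
      rw [pow_one, ← sbridge]
      exact this
    · intro hXY
      ext i j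
      simp only [Matrix.map_apply]
      rw [sbridge]
      simpa using hXY i j
  have hmappow : ∀ n : ℕ, (Φ ^ n).map (PadicInt.toZMod (p := p))
      = (Φ.map (PadicInt.toZMod (p := p))) ^ n := by
    intro n
    rw [← RingHom.mapMatrix_apply, ← RingHom.mapMatrix_apply, map_pow]
  -- the exponent e
  obtain ⟨e, he1, hej⟩ := exists_pow_idem (Φ.map (PadicInt.toZMod (p := p)))
  have hcong1 : ∀ j : ℕ, 1 ≤ j → Cong 1 (Φ ^ (j * e)) (Φ ^ e) := by
    intro j hj
    rw [← bridge, hmappow, hmappow]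
    exact hej j hj
  have hcommpow : ∀ a b : ℕ, Commute (Φ ^ a) (Φ ^ b) :=
    fun a b => (Commute.refl Φ).pow_pow a b
  have hstep : ∀ k, Cong (k + 1) ((Φ ^ e) ^ p ^ (k + 1)) ((Φ ^ e) ^ p ^ k) := by
    intro k
    induction k with
    | zero =>
      refine cong_of_eq (hcong1 p hp'.one_lt.le) ?_ ?_
      · rw [pow_one, ← pow_mul, mul_comm]
      · rw [pow_zero, pow_one]
    | succ n ih =>
      refine cong_of_eq
        (cong_pow_p (by omega) ((Commute.refl (Φ ^ e)).pow_pow _ _) ih) ?_ ?_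
      · show (((Φ ^ e) ^ p ^ (n + 1)) ^ p) = (Φ ^ e) ^ p ^ (n + 1 + 1)
        simp only [← pow_mul]
        congr 1
        rw [pow_succ]
        ring
      · show (((Φ ^ e) ^ p ^ n) ^ p) = (Φ ^ e) ^ p ^ (n + 1)
        simp only [← pow_mul]
        congr 1
        rw [pow_succ]
        ring
  have hsq : ∀ k, Cong (k + 1) (((Φ ^ e) ^ p ^ k) ^ 2) ((Φ ^ e) ^ p ^ k) := by
    intro k
    induction k with
    | zero =>
      refine cong_of_eq (hcong1 2 (by omega)) ?_ ?_
      · rw [pow_zero, pow_one, ← pow_mul, mul_comm]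
      · rw [pow_zero, pow_one]
    | succ n ih =>
      refine cong_of_eq
        (cong_pow_p (by omega) ((Commute.refl ((Φ ^ e) ^ p ^ n)).pow_left 2) ih) ?_ ?_
      · show ((((Φ ^ e) ^ p ^ n) ^ 2) ^ p) = ((Φ ^ e) ^ p ^ (n + 1)) ^ 2
        simp only [← pow_mul]
        congr 1
        rw [pow_succ]
        ring
      · show (((Φ ^ e) ^ p ^ n) ^ p) = (Φ ^ e) ^ p ^ (n + 1)
        simp only [← pow_mul]
        congr 1
        rw [pow_succ]
        ring
  -- the limit idempotent
  obtain ⟨Q, hQA⟩ := exists_limit (A := fun k => (Φ ^ e) ^ p ^ k) hstep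
  have hQQ : Q * Q = Q := by
    apply eq_of_forall_cong
    intro s
    apply cong_mono (show s ≤ s + 1 by omega)
    have h1 : Cong (s + 1) (Q * Q) ((Φ ^ e) ^ p ^ s * (Φ ^ e) ^ p ^ s) :=
      cong_mul (hQA s) (hQA s)
    have h2 : Cong (s + 1) (Q * Q) (((Φ ^ e) ^ p ^ s) ^ 2) :=
      cong_of_eq h1 rfl (sq ((Φ ^ e) ^ p ^ s)).symm
    exact cong_trans (cong_trans h2 (hsq s)) (cong_symm (hQA s))
  have hQΦ : Commute Φ Q := by
    show Φ * Q = Q * Φ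
    apply eq_of_forall_cong
    intro s
    apply cong_mono (show s ≤ s + 1 by omega)
    have h1 : Cong (s + 1) (Φ * Q) (Φ * (Φ ^ e) ^ p ^ s) := cong_mul (cong_refl _) (hQA s)
    have h2 : Φ * (Φ ^ e) ^ p ^ s = (Φ ^ e) ^ p ^ s * Φ :=
      (((Commute.refl Φ).pow_right _).pow_right _).eq
    rw [h2] at h1
    exact cong_trans h1 (cong_symm (cong_mul (hQA s) (cong_refl _)))
  have hcommQ : ∀ m : ℕ, Commute (Φ ^ m) Q := fun m => (hQΦ.pow_left m)
  -- Q is nonzero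
  have hQ0 : Q ≠ 0 := by
    intro h0
    apply hnil
    refine ⟨e, ?_⟩
    rw [← hmappow]
    have hc : Cong 1 (Φ ^ e) (0 : Matrix (Fin d) (Fin d) ℤ_[p]) := by
      have h1 := cong_symm (hQA 0)
      rw [h0] at h1
      refine cong_of_eq h1 ?_ rfl
      simp
    have h2 := (bridge _ _).mpr hc
    simpa using h2
  -- det (1 - Q) = 0
  have h1Q : (1 - Q) * (1 - Q) = 1 - Q := by
    have h1 : (1 - Q) * (1 - Q) = 1 - Q - Q + Q * Q := by noncomm_ring
    rw [h1, hQQ]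
    abel
  have hdet1Q : (1 - Q).det = 0 := by
    have hidem : (1 - Q).det * (1 - Q).det = (1 - Q).det := by
      rw [← Matrix.det_mul, h1Q]
    have hz : (1 - Q).det * ((1 - Q).det - 1) = 0 := by
      rw [mul_sub, mul_one, hidem, sub_self]
    rcases mul_eq_zero.mp hz with h' | h'
    · exact h'
    · exfalso
      have h1 : (1 - Q).det = 1 := by linear_combination h'
      have hu : IsUnit (1 - Q) := (Matrix.isUnit_iff_isUnit_det _).mpr (h1 ▸ isUnit_one)
      have h2 : (1 - Q) * Q = (1 - Q) * 0 := by
        rw [mul_zero, sub_mul, one_mul, hQQ, sub_self]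
      exact hQ0 (hu.mul_left_cancel h2)
  have hdetQ1 : (Q - 1).det = 0 := by
    rw [show Q - 1 = -(1 - Q) from (neg_sub _ _).symm, Matrix.det_neg, hdet1Q, mul_zero]
  -- multiplicativity of X ↦ det (X*Q + (1 - Q))
  have eq0 : Q * (1 - Q) = 0 := by rw [mul_sub, mul_one, hQQ, sub_self]
  have eq0' : (1 - Q) * Q = 0 := by rw [sub_mul, one_mul, hQQ, sub_self]
  have key1 : ∀ X Y : Matrix (Fin d) (Fin d) ℤ_[p], Y * Q = Q * Y →
      (X * Q + (1 - Q)) * (Y * Q + (1 - Q)) = (X * Y) * Q + (1 - Q) := by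
    intro X Y hY
    have expand : (X * Q + (1 - Q)) * (Y * Q + (1 - Q))
        = X * Q * (Y * Q) + X * Q * (1 - Q) + ((1 - Q) * (Y * Q) + (1 - Q) * (1 - Q)) := by
      rw [add_mul, mul_add, mul_add]
    have e1 : X * Q * (Y * Q) = (X * Y) * Q := by
      calc X * Q * (Y * Q) = X * (Q * Y * Q) := by rw [mul_assoc, ← mul_assoc Q Y Q]
      _ = X * (Y * Q * Q) := by rw [← hY]
      _ = X * (Y * Q) := by rw [mul_assoc Y Q Q, hQQ]
      _ = X * Y * Q := by rw [← mul_assoc]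
    have e2 : X * Q * (1 - Q) = 0 := by rw [mul_assoc, eq0, mul_zero]
    have e3 : (1 - Q) * (Y * Q) = 0 := by
      rw [← mul_assoc, sub_mul, one_mul, ← hY, sub_mul, mul_assoc, hQQ, sub_self]
    rw [expand, e1, e2, e3, h1Q, add_zero, zero_add]
  have Fmul : ∀ X Y : Matrix (Fin d) (Fin d) ℤ_[p], Y * Q = Q * Y →
      ((X * Y) * Q + (1 - Q)).det = (X * Q + (1 - Q)).det * (Y * Q + (1 - Q)).det := by
    intro X Y hY
    rw [← Matrix.det_mul, key1 X Y hY]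
  -- factorisation of det X
  have key2 : ∀ X : Matrix (Fin d) (Fin d) ℤ_[p], X * Q = Q * X →
      (X * Q + (1 - Q)) * (X * (1 - Q) + Q) = X := by
    intro X hX
    have expand : (X * Q + (1 - Q)) * (X * (1 - Q) + Q)
        = X * Q * (X * (1 - Q)) + X * Q * Q + ((1 - Q) * (X * (1 - Q)) + (1 - Q) * Q) := by
      rw [add_mul, mul_add, mul_add]
    have e1 : X * Q * (X * (1 - Q)) = 0 := by
      calc X * Q * (X * (1 - Q)) = X * (Q * X) * (1 - Q) := by
            rw [mul_assoc X Q (X * (1 - Q)), ← mul_assoc Q X (1 - Q), ← mul_assoc]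
      _ = X * (X * Q) * (1 - Q) := by rw [← hX]
      _ = 0 := by rw [← mul_assoc, mul_assoc (X * X) Q (1 - Q), eq0, mul_zero]
    have e2 : X * Q * Q = X * Q := by rw [mul_assoc, hQQ]
    have e3 : (1 - Q) * (X * (1 - Q)) = X * (1 - Q) := by
      calc (1 - Q) * (X * (1 - Q)) = X * (1 - Q) - Q * (X * (1 - Q)) := by
            rw [sub_mul, one_mul]
      _ = X * (1 - Q) - X * Q * (1 - Q) := by rw [← mul_assoc, ← hX, mul_assoc]
      _ = X * (1 - Q) := by rw [mul_assoc, eq0, mul_zero, sub_zero]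
    rw [expand, e1, e2, e3, eq0', zero_add, add_zero, mul_sub, mul_one]
    abel
  have Ffact : ∀ X : Matrix (Fin d) (Fin d) ℤ_[p], X * Q = Q * X →
      X.det = (X * Q + (1 - Q)).det * (X * (1 - Q) + Q).det := by
    intro X hX
    rw [← Matrix.det_mul, key2 X hX]
  have hnormone : ∀ x : ℤ_[p], (p : ℤ_[p]) ∣ x - 1 → ‖x‖ = 1 := by
    intro x hx
    have h1 : ‖x - 1‖ ≤ ((p : ℝ) ^ 1)⁻¹ := dvd_norm_le (by rwa [pow_one])
    have h2 : ‖x - 1‖ < ‖(1 : ℤ_[p])‖ := by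
      rw [norm_one]
      refine lt_of_le_of_lt h1 ?_
      rw [pow_one, inv_lt_one_iff₀]
      right
      exact hp1
    rw [← norm_one (α := ℤ_[p])]
    exact norm_eq_of_sub_lt h2
  -- ‖det (Q + Q - 1)‖ = 1 and ‖det (1 - Q - Q)‖ = 1
  have hW : (Q + Q - 1) * (Q + Q - 1) = 1 := by
    have h1 : (Q + Q - 1) * (Q + Q - 1)
        = Q * Q + Q * Q + Q * Q + Q * Q - Q - Q - Q - Q + 1 := by noncomm_ring
    rw [h1, hQQ]
    abel
  have habs1 : ∀ x : ℤ_[p], x * x = 1 → ‖x‖ = 1 := by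
    intro x hx
    have h1 : ‖x‖ * ‖x‖ = 1 := by rw [← norm_mul, hx, norm_one]
    nlinarith [norm_nonneg x]
  have hnormW : ‖(Q + Q - 1).det‖ = 1 := by
    apply habs1
    rw [← Matrix.det_mul, hW, Matrix.det_one]
  have hnormW' : ‖(1 - Q - Q).det‖ = 1 := by
    apply habs1
    have h1 : (1 - Q - Q) * (1 - Q - Q) = (Q + Q - 1) * (Q + Q - 1) := by
      have h2 : (1 - Q - Q : Matrix (Fin d) (Fin d) ℤ_[p]) = -(Q + Q - 1) := by abel
      rw [h2, neg_mul_neg]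
    rw [← Matrix.det_mul, h1, hW, Matrix.det_one]
  -- F on powers of Φ
  have hFpow : ∀ m : ℕ, (Φ ^ m * Q + (1 - Q)).det = ((Φ * Q + (1 - Q)).det) ^ m := by
    intro m
    induction m with
    | zero =>
      rw [pow_zero, pow_zero, one_mul, add_sub_cancel, Matrix.det_one]
    | succ n ih =>
      rw [pow_succ, Fmul (Φ ^ n) Φ hQΦ.eq, ih, pow_succ]
  have hcA0 : Cong 1 (Φ ^ e) Q := by
    refine cong_of_eq (cong_symm (hQA 0)) ?_ rfl
    simp
  have hFA0norm : ‖(Φ ^ e * Q + (1 - Q)).det‖ = 1 := by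
    apply hnormone
    have hc : Cong 1 (Φ ^ e * Q + (1 - Q)) (Q * Q + (1 - Q)) :=
      cong_add (cong_mul hcA0 (cong_refl _)) (cong_refl _)
    have h1 : Q * Q + (1 - Q) = 1 := by rw [hQQ, add_sub_cancel]
    rw [h1] at hc
    have := cong_det hc
    rwa [Matrix.det_one, pow_one] at this
  have hFΦnorm : ‖(Φ * Q + (1 - Q)).det‖ = 1 := by
    refine real_pow_eq_one (norm_nonneg _) he1 ?_
    rw [← pnorm_pow, ← hFpow e, hFA0norm]
  -- nonvanishing of F (Q - Φ^j)
  have hcommQ' : ∀ j : ℕ, (Φ ^ j - 1) * Q = Q * (Φ ^ j - 1) := by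
    intro j
    rw [sub_mul, mul_sub, one_mul, mul_one, (hcommQ j).eq]
  have hFQj : ∀ j : ℕ, 1 ≤ j →
      ((Q - Φ ^ j) * Q + (1 - Q)).det
        = (1 - Q - Q).det * ((Φ ^ j - 1) * Q + (1 - Q)).det := by
    intro j hj
    have hXQ : (Q - Φ ^ j) * Q = (1 - Φ ^ j) * Q := by
      rw [sub_mul, sub_mul, hQQ, one_mul]
    rw [hXQ]
    have h2 : (1 - Φ ^ j : Matrix (Fin d) (Fin d) ℤ_[p]) = (-1) * (Φ ^ j - 1) := by
      rw [neg_one_mul, neg_sub]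
    rw [h2, Fmul (-1) (Φ ^ j - 1) (hcommQ' j)]
    congr 2
    rw [neg_one_mul]
    abel
  have hFne : ∀ j : ℕ, 1 ≤ j → ((Φ ^ j - 1) * Q + (1 - Q)).det ≠ 0 := by
    intro j hj hzero
    apply h j hj
    rw [Ffact (Φ ^ j - 1) (hcommQ' j), hzero, zero_mul]
  have hβpos : ∀ j : ℕ, 1 ≤ j → 0 < ‖((Q - Φ ^ j) * Q + (1 - Q)).det‖ := by
    intro j hj
    rw [hFQj j hj]
    apply norm_pos_iff.mpr
    apply mul_ne_zero _ (hFne j hj)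
    intro hzero
    rw [hzero, norm_zero] at hnormW'
    exact zero_ne_one hnormW'
  have hEE : ∀ k : ℕ, (Φ ^ e) ^ p ^ k = Φ ^ (e * p ^ k) := by
    intro k
    rw [← pow_mul]
  -- the spike: determinants at n = e * p^k are very small
  have hspike : ∀ k : ℕ, ‖(Φ ^ (e * p ^ k) - 1).det‖ ≤ ((p : ℝ) ^ (k + 1))⁻¹ := by
    intro k
    apply dvd_norm_le
    have hc : Cong (k + 1) (Φ ^ (e * p ^ k) - 1) (Q - 1) :=
      cong_sub (cong_of_eq (cong_symm (hQA k)) (hEE k) rfl) (cong_refl _)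
    have := cong_det hc
    rwa [hdetQ1, sub_zero] at this
  -- the G-factor has norm 1 for all m ≥ e
  have hgnorm : ∀ m : ℕ, e ≤ m → ‖((Φ ^ m - 1) * (1 - Q) + Q).det‖ = 1 := by
    intro m hme
    have hc1 : Cong 1 (Φ ^ e * (1 - Q)) 0 := by
      have := cong_mul hcA0 (cong_refl (1 - Q))
      rwa [eq0] at this
    have hc2 : Cong 1 (Φ ^ m * (1 - Q)) 0 := by
      have hm : Φ ^ m * (1 - Q) = Φ ^ (m - e) * (Φ ^ e * (1 - Q)) := by
        rw [← mul_assoc, ← pow_add, Nat.sub_add_cancel hme]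
      have := cong_mul (cong_refl (Φ ^ (m - e))) hc1
      rw [mul_zero] at this
      exact cong_of_eq this hm.symm rfl
    have hc3 : Cong 1 ((Φ ^ m - 1) * (1 - Q) + Q) (Q + Q - 1) := by
      have ha : (Φ ^ m - 1) * (1 - Q) + Q = Φ ^ m * (1 - Q) - (1 - Q) + Q := by
        rw [sub_mul, one_mul]
      have hb : (0 : Matrix (Fin d) (Fin d) ℤ_[p]) - (1 - Q) + Q = Q + Q - 1 := by abel
      exact cong_of_eq (cong_add (cong_sub hc2 (cong_refl (1 - Q))) (cong_refl Q))
        ha.symm hb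
    have hd1 := cong_det hc3
    have hlt : ‖((Φ ^ m - 1) * (1 - Q) + Q).det - (Q + Q - 1).det‖ < ‖(Q + Q - 1).det‖ := by
      rw [hnormW]
      refine lt_of_le_of_lt (by simpa [pow_one] using dvd_norm_le (s := 1) hd1) ?_
      rw [inv_lt_one_iff₀]
      right
      exact hp1
    rw [norm_eq_of_sub_lt hlt, hnormW]
  -- the F-factor at e * p^k - j eventually has constant norm
  have hdetev : ∀ j : ℕ, 1 ≤ j → ∀ᶠ k in Filter.atTop,
      ‖(Φ ^ (e * p ^ k - j) - 1).det‖ = ‖((Q - Φ ^ j) * Q + (1 - Q)).det‖ := by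
    intro j hj
    have hev1 : ∀ᶠ k in Filter.atTop, e + j ≤ e * p ^ k := by
      filter_upwards [Filter.eventually_ge_atTop (e + j)] with k hk
      have h1 : k < p ^ k := Nat.lt_pow_self hp'.one_lt
      have h2 : p ^ k ≤ e * p ^ k := Nat.le_mul_of_pos_left _ (by omega)
      omega
    have hev2 : ∀ᶠ k in Filter.atTop,
        ((p : ℝ) ^ (k + 1))⁻¹ < ‖((Q - Φ ^ j) * Q + (1 - Q)).det‖ := by
      have hten : Filter.Tendsto (fun k : ℕ => ((p : ℝ) ^ (k + 1))⁻¹)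
          Filter.atTop (nhds 0) := by
        simp only [← inv_pow]
        exact (tendsto_pow_atTop_nhds_zero_of_lt_one (by positivity)
          (by rw [inv_lt_one_iff₀]; right; exact hp1)).comp (Filter.tendsto_add_atTop_nat 1)
      exact hten.eventually_lt_const (hβpos j hj)
    filter_upwards [hev1, hev2] with k hk1 hk2
    set m : ℕ := e * p ^ k - j with hm
    have hmj : m + j = e * p ^ k := by
      have h1 : k < p ^ k := Nat.lt_pow_self hp'.one_lt
      omega
    have hme : e ≤ m := by omega
    -- big F value
    have hbig : ‖((Φ ^ (e * p ^ k) - Φ ^ j) * Q + (1 - Q)).det‖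
        = ‖((Q - Φ ^ j) * Q + (1 - Q)).det‖ := by
      apply norm_eq_of_sub_lt
      refine lt_of_le_of_lt (dvd_norm_le (s := k + 1) ?_) hk2
      apply cong_det
      exact cong_add (cong_mul (cong_sub
        (cong_of_eq (cong_symm (hQA k)) (hEE k) rfl) (cong_refl _)) (cong_refl _))
        (cong_refl _)
    -- relate to F at m
    have hiden : (Φ ^ m - 1) * Φ ^ j = Φ ^ (e * p ^ k) - Φ ^ j := by
      rw [sub_mul, one_mul, ← pow_add, hmj]
    have hmulF := Fmul (Φ ^ m - 1) (Φ ^ j) (hcommQ j).eq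
    rw [hiden] at hmulF
    have hnormFj : ‖(Φ ^ j * Q + (1 - Q)).det‖ = 1 := by
      rw [hFpow j, pnorm_pow, hFΦnorm, one_pow]
    have hFm : ‖((Φ ^ m - 1) * Q + (1 - Q)).det‖
        = ‖((Q - Φ ^ j) * Q + (1 - Q)).det‖ := by
      rw [← hbig, hmulF, norm_mul, hnormFj, mul_one]
    -- assemble via the factorisation
    rw [Ffact (Φ ^ m - 1) (hcommQ' m), norm_mul, hFm, hgnorm m hme, mul_one]
  -- put everything together
  set β : ℕ → ℝ := fun j => ‖((Q - Φ ^ j) * Q + (1 - Q)).det‖ with hβdef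
  set B : ℝ := ∑ j ∈ Finset.Icc 1 D, (β j)⁻¹ with hBdef
  set C : ℝ := ∑ i : Fin D, ‖c i‖ with hCdef
  have hβinvnonneg : ∀ j, 0 ≤ (β j)⁻¹ := fun j => inv_nonneg.mpr (norm_nonneg _)
  have hCnonneg : 0 ≤ C := Finset.sum_nonneg fun i _ => norm_nonneg _
  have hevall : ∀ᶠ k in Filter.atTop, ∀ j ∈ Finset.Icc 1 D,
      ‖(Φ ^ (e * p ^ k - j) - 1).det‖ = β j :=
    (Filter.eventually_all_finset _).mpr
      (fun j hj => hdetev j (Finset.mem_Icc.mp hj).1)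
  have hevD : ∀ᶠ k in Filter.atTop, D + 1 ≤ e * p ^ k := by
    filter_upwards [Filter.eventually_ge_atTop (D + 1)] with k hk
    have h1 : k < p ^ k := Nat.lt_pow_self hp'.one_lt
    have h2 : p ^ k ≤ e * p ^ k := Nat.le_mul_of_pos_left _ (by omega)
    omega
  have hCB : ∀ᶠ k in Filter.atTop, C * B < (p : ℝ) ^ (k + 1) := by
    filter_upwards [(tendsto_pow_atTop_atTop_of_one_lt hp1).eventually_gt_atTop (C * B)]
      with k hk
    refine lt_of_lt_of_le hk (pow_le_pow_right₀ hp1.le (by omega))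
  obtain ⟨k, hk1, hk2, hk3⟩ := (hevall.and (hevD.and hCB)).exists
  set N : ℕ := e * p ^ k with hNdef
  have hrec' := hrec (N - D) (by omega)
  rw [show N - D + D = N by omega] at hrec'
  have habs := congrArg (‖·‖) hrec'
  -- left side
  have hdetpos : 0 < ‖(Φ ^ N - 1).det‖ := norm_pos_iff.mpr (h N (by omega))
  have hlhs : ‖((‖(Φ ^ N - 1).det‖⁻¹ : ℝ) : ℂ)‖ = ‖(Φ ^ N - 1).det‖⁻¹ := by
    rw [Complex.norm_real, Real.norm_of_nonneg (inv_nonneg.mpr (norm_nonneg _))]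
  have hlow : (p : ℝ) ^ (k + 1) ≤ ‖(Φ ^ N - 1).det‖⁻¹ := by
    have h1 := inv_anti₀ hdetpos (hspike k)
    rwa [inv_inv] at h1
  -- right side
  have hrhs : ‖(∑ i : Fin D, c i *
      ((‖(Φ ^ (N - D + (i : ℕ)) - 1).det‖⁻¹ : ℝ) : ℂ))‖ ≤ C * B := by
    refine le_trans (norm_sum_le _ _) ?_
    rw [hCdef, Finset.sum_mul]
    apply Finset.sum_le_sum
    intro i _
    rw [norm_mul]
    apply mul_le_mul_of_nonneg_left _ (norm_nonneg _)
    have hiD : (i : ℕ) < D := i.isLt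
    have hjmem : D - (i : ℕ) ∈ Finset.Icc 1 D := Finset.mem_Icc.mpr (by omega)
    have hexp : N - D + (i : ℕ) = N - (D - (i : ℕ)) := by omega
    rw [hexp, Complex.norm_real, Real.norm_of_nonneg (inv_nonneg.mpr (norm_nonneg _)),
      hk1 _ hjmem]
    exact Finset.single_le_sum (fun j _ => hβinvnonneg j) hjmem
  rw [hlhs] at habs
  rw [habs] at hlow
  have := le_trans hlow hrhs
  linarith
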